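/- Let p be a prime and let G be a finite p-group with μ(G) = p⁴. Then either |G:Z(G)| = p⁴, or G contains an abelian subgroup of index at most p². -/

import Mathlib

open Pointwise

/-- The Chermak–Delgado index-measure of a subgroup `H` of `G`:
`m(G,H) = |G:H| * |G:C_G(H)|`. -/
noncomputable def cdMeasure {G : Type*} [Group G] (H : Subgroup G) : ℕ :=
  H.index * (Subgroup.centralizer (H : Set G)).index

/-- `μ(G)`, the minimum of `m(G,H)` over all subgroups `H ≤ G`. -/
noncomputable def cdMu (G : Type*) [Group G] : ℕ :=
  sInf {n : ℕ | ∃ H : Subgroup G, cdMeasure H = n}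

/-- A subgroup `H ≤ G` is a CD-subgroup if `m(G,H) = μ(G)`. -/
def IsCDSubgroup {G : Type*} [Group G] (H : Subgroup G) : Prop :=
  cdMeasure H = cdMu G

lemma cdMu_le {G : Type*} [Group G] (H : Subgroup G) : cdMu G ≤ cdMeasure H :=
  Nat.sInf_le ⟨H, rfl⟩

lemma exists_cd (G : Type*) [Group G] : ∃ H : Subgroup G, cdMeasure H = cdMu G :=
  Nat.sInf_mem (⟨cdMeasure (⊤ : Subgroup G), ⊤, rfl⟩ :
    {n : ℕ | ∃ H : Subgroup G, cdMeasure H = n}.Nonempty)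

/-- Key inequality: `m(H ∩ C(H)) ≤ m(H)`. -/
lemma cdMeasure_inf_centralizer_le {G : Type*} [Group G] [Finite G] (H : Subgroup G) :
    cdMeasure (H ⊓ Subgroup.centralizer (H : Set G)) ≤ cdMeasure H := by
  set K := Subgroup.centralizer (H : Set G) with hK
  set J := H ⊔ K with hJ
  set A := H ⊓ K with hA
  have hJne : J.index ≠ 0 := Subgroup.index_ne_zero_of_finite
  have hrelJne : H.relIndex J ≠ 0 :=
    (Subgroup.index_ne_zero_of_finite : (H.subgroupOf J).index ≠ 0)
  -- J ≤ centralizer A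
  have hJC : J ≤ Subgroup.centralizer (A : Set G) := by
    refine sup_le ?_ ?_
    · exact Subgroup.le_centralizer_iff.mpr
        (le_trans inf_le_right (le_refl K))
    · exact Subgroup.centralizer_le (SetLike.coe_subset_coe.mpr inf_le_left)
  have hCidx : (Subgroup.centralizer (A : Set G)).index ≤ J.index :=
    Nat.le_of_dvd (Nat.pos_of_ne_zero hJne) (Subgroup.index_dvd_of_le hJC)
  have hAidx : H.relIndex K * K.index = A.index := by
    rw [← Subgroup.inf_relIndex_right]
    exact Subgroup.relIndex_mul_index inf_le_right
  have hHidx : H.relIndex J * J.index = H.index :=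
    Subgroup.relIndex_mul_index le_sup_left
  have hrel : H.relIndex K ≤ H.relIndex J :=
    Subgroup.relIndex_le_of_le_right le_sup_right hrelJne
  calc cdMeasure A = A.index * (Subgroup.centralizer (A : Set G)).index := rfl
    _ ≤ (H.relIndex K * K.index) * J.index := by
        rw [hAidx]; exact Nat.mul_le_mul_left _ hCidx
    _ ≤ (H.relIndex J * K.index) * J.index :=
        Nat.mul_le_mul_right _ (Nat.mul_le_mul_right _ hrel)
    _ = (H.relIndex J * J.index) * K.index := by ring
    _ = H.index * K.index := by rw [hHidx]
    _ = cdMeasure H := rfl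

theorem stmt_16 {G : Type*} [Group G] [Finite G] (p : ℕ) (hp : p.Prime)
    (hpG : IsPGroup p G) (hmu : cdMu G = p ^ 4) :
    (Subgroup.center G).index = p ^ 4 ∨
      ∃ A : Subgroup G, IsMulCommutative A ∧ A.index ≤ p ^ 2 := by
  obtain ⟨H, hH⟩ := exists_cd G
  set A := H ⊓ Subgroup.centralizer (H : Set G) with hAdef
  have hAcomm : A ≤ Subgroup.centralizer (A : Set G) :=
    le_trans inf_le_right (Subgroup.centralizer_le (SetLike.coe_subset_coe.mpr inf_le_left))
  have hmA : cdMeasure A = p ^ 4 := by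
    refine le_antisymm ?_ ?_
    · calc cdMeasure A ≤ cdMeasure H := cdMeasure_inf_centralizer_le H
        _ = p ^ 4 := by rw [hH, hmu]
    · rw [← hmu]; exact cdMu_le A
  set a := A.index with ha
  set b := (Subgroup.centralizer (A : Set G)).index with hb
  have hab : a * b = p ^ 4 := hmA
  have hane : a ≠ 0 := Subgroup.index_ne_zero_of_finite
  have hbne : b ≠ 0 := Subgroup.index_ne_zero_of_finite
  have hba : b ∣ a := Subgroup.index_dvd_of_le hAcomm
  have hadvd : a ∣ p ^ 4 := ⟨b, hab.symm⟩
  obtain ⟨k, hk4, hka⟩ := (Nat.dvd_prime_pow hp).mp hadvd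
  have hpk : 0 < p ^ k := Nat.pow_pos (n := k) hp.pos
  have hbval : b = p ^ (4 - k) := by
    have h1 : p ^ k * b = p ^ k * p ^ (4 - k) := by
      rw [← pow_add, Nat.add_sub_cancel' hk4, ← hka]; exact hab
    exact Nat.eq_of_mul_eq_mul_left hpk h1
  have hk2 : 2 ≤ k := by
    have : p ^ (4 - k) ∣ p ^ k := hbval ▸ hka ▸ hba
    have h := (Nat.pow_dvd_pow_iff_le_right hp.one_lt).mp this
    omega
  -- abelian-ness of A
  have hAab : IsMulCommutative A := Subgroup.le_centralizer_iff_isMulCommutative.mp hAcomm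
  interval_cases k
  · -- k = 2 : A has index p²
    exact Or.inr ⟨A, hAab, le_of_eq hka⟩
  · -- k = 3 : centralizer A has index p; enlarge A by one element
    have hbp : b = p ^ 1 := by rw [hbval]
    set B := Subgroup.centralizer (A : Set G) with hBdef
    have hABlt : A < B := by
      refine lt_of_le_of_ne hAcomm (fun h => ?_)
      have : a = b := by rw [ha, hb, h]
      rw [hka, hbp] at this
      exact absurd (Nat.pow_right_injective hp.two_le this) (by omega)
    obtain ⟨x, hxB, hxA⟩ := SetLike.exists_of_lt hABlt
    set S : Set G := (A : Set G) ∪ {x} with hSdef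
    have hcomm : ∀ y ∈ S, ∀ z ∈ S, y * z = z * y := by
      rintro y (hy | hy) z (hz | hz)
      · exact (hAcomm hz y hy)
      · rw [Set.mem_singleton_iff] at hz; subst hz
        exact (hxB y hy)
      · rw [Set.mem_singleton_iff] at hy; subst hy
        exact (hxB z hz).symm
      · rw [Set.mem_singleton_iff] at hy hz; subst hy; subst hz; rfl
    set A' := Subgroup.closure S with hA'def
    have hA'comm : A' ≤ Subgroup.centralizer (A' : Set G) := by
      intro g hg
      rw [Subgroup.mem_centralizer_iff]
      intro h hh
      have hgC : g ∈ Subgroup.centralizer S :=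
        (Subgroup.closure_le _).mpr (fun s hs => Subgroup.mem_centralizer_iff.mpr
          (fun t ht => hcomm t ht s hs)) hg
      have hSg : S ⊆ (Subgroup.centralizer {g} : Subgroup G) := by
        intro s hs
        exact Subgroup.mem_centralizer_singleton_iff.mpr (hgC s hs)
      have : h ∈ Subgroup.centralizer {g} := (Subgroup.closure_le _).mpr hSg hh
      exact Subgroup.mem_centralizer_singleton_iff.mp this
    have hAA' : A ≤ A' := fun y hy => Subgroup.subset_closure (Or.inl hy)
    have hxA' : x ∈ A' := Subgroup.subset_closure (Or.inr rfl)
    have hA'ne : A'.index ≠ A.index := by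
      intro h
      have hA'ne0 : A'.index ≠ 0 := Subgroup.index_ne_zero_of_finite
      have := Subgroup.relIndex_mul_index hAA'
      rw [← h] at this
      have hrel1 : A.relIndex A' = 1 := by
        have := Nat.eq_of_mul_eq_mul_right (Nat.pos_of_ne_zero hA'ne0)
          (by rw [this, one_mul] : A.relIndex A' * A'.index = 1 * A'.index)
        exact this
      exact hxA (Subgroup.relIndex_eq_one.mp hrel1 hxA')
    have hA'dvd : A'.index ∣ p ^ 3 := hka ▸ Subgroup.index_dvd_of_le hAA'
    obtain ⟨j, hj3, hja⟩ := (Nat.dvd_prime_pow hp).mp hA'dvd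
    have hj2 : j ≤ 2 := by
      rcases Nat.lt_or_ge j 3 with h | h
      · omega
      · exfalso; apply hA'ne; rw [hja, ← ha, hka]
        congr 1; omega
    refine Or.inr ⟨A', Subgroup.le_centralizer_iff_isMulCommutative.mp hA'comm, ?_⟩
    rw [hja]
    exact Nat.pow_le_pow_right hp.pos hj2
  · -- k = 4 : A is central, so |G : Z(G)| = p⁴
    have hb1 : b = 1 := by rw [hbval]; norm_num
    have hCtop : Subgroup.centralizer (A : Set G) = ⊤ := Subgroup.index_eq_one.mp hb1
    have hAZ : (A : Set G) ⊆ Subgroup.center G :=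
      Subgroup.centralizer_eq_top_iff_subset.mp hCtop
    have hZdvd : (Subgroup.center G).index ∣ p ^ 4 :=
      hka ▸ Subgroup.index_dvd_of_le (fun y hy => hAZ hy)
    have hZge : p ^ 4 ≤ (Subgroup.center G).index := by
      have := cdMu_le (⊤ : Subgroup G)
      rw [hmu] at this
      refine le_trans this (le_of_eq ?_)
      show (⊤ : Subgroup G).index * (Subgroup.centralizer ((⊤ : Subgroup G) : Set G)).index = _
      rw [Subgroup.index_top, one_mul, Subgroup.coe_top, Subgroup.centralizer_univ]
    exact Or.inl (le_antisymm (Nat.le_of_dvd (Nat.pow_pos (n := 4) hp.pos) hZdvd) hZge)
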